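/- For each k = 1,…,n there exist positive integers α_S, indexed by the k-element subsets S of {1,…,n} with 1 ∈ S, such that in R′ one has n·σ_k = ∑_S α_S · \overline{x_{w(S)}}, where w(S) is the word listing the elements of S in increasing order; that is, n·σ_k is a linear combination with positive integer coefficients of the orbit polynomials \overline{x_1x_{i(2)}⋯x_{i(k)}} with 1 < i(2) < ⋯ < i(k) ≤ n. -/

import Mathlib

open Finset

/-- The `k`-th elementary polynomial `σ_k` in the noncommuting variables
`x_1, …, x_n` of the free algebra `K⟨x_1,…,x_n⟩`. -/
noncomputable def elemPoly (K : Type*) [Field K] (n k : ℕ) : FreeAlgebra K (Fin n) :=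
  ∑ s ∈ Finset.univ.powersetCard k, ((s.sort (· ≤ ·)).map (FreeAlgebra.ι K)).prod

/-- The relation on the free algebra identifying `x_i * σ_k` with `σ_k * x_i`
for `1 ≤ i, k ≤ n`; the quotient `R′ = P/I` by the two-sided ideal `I` generated
by the commutators `[x_i, σ_k]` is `RingQuot` of this relation. -/
noncomputable def commRel (K : Type*) [Field K] (n : ℕ) :
    FreeAlgebra K (Fin n) → FreeAlgebra K (Fin n) → Prop :=
  fun a b => ∃ (i : Fin n) (k : ℕ), 1 ≤ k ∧ k ≤ n ∧
    a = FreeAlgebra.ι K i * elemPoly K n k ∧ b = elemPoly K n k * FreeAlgebra.ι K i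

/-- The quotient ring `R′ = P/I`. -/
noncomputable abbrev Rquot (K : Type*) [Field K] (n : ℕ) := RingQuot (commRel K n)

/-- The quotient map `P → R′`. -/
noncomputable def mkR (K : Type*) [Field K] (n : ℕ) :
    FreeAlgebra K (Fin n) →ₐ[K] Rquot K n :=
  RingQuot.mkAlgHom K (commRel K n)

/-- The image in `R′` of the generator `x_i`. -/
noncomputable def XR (K : Type*) [Field K] (n : ℕ) (i : Fin n) : Rquot K n :=
  mkR K n (FreeAlgebra.ι K i)

/-- The generator of the group `G` of circular permutations, acting as the
`K`-algebra automorphism of the free algebra sending `x_i` to `x_{i+1}` (mod `n`). -/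
noncomputable def rotHom (K : Type*) [Field K] (n : ℕ) :
    FreeAlgebra K (Fin n) →ₐ[K] FreeAlgebra K (Fin n) :=
  FreeAlgebra.lift K fun i => FreeAlgebra.ι K (finRotate n i)

/-- The monomial `x_w = x_{i(1)} ⋯ x_{i(d)}` of a word `w`. -/
noncomputable def wordMonomial (K : Type*) [Field K] (n : ℕ) (w : List (Fin n)) :
    FreeAlgebra K (Fin n) :=
  (w.map (FreeAlgebra.ι K)).prod

/-- The orbit polynomial `\overline{x_w} = ∑_{g ∈ G} (x_w)^g` of a word `w`
(the group `G` of circular permutations has order `n`). -/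
noncomputable def orbitPoly (K : Type*) [Field K] (n : ℕ) (w : List (Fin n)) :
    FreeAlgebra K (Fin n) :=
  ∑ m ∈ Finset.range n, (⇑(rotHom K n))^[m] (wordMonomial K n w)

/-! ### Auxiliary lemmas -/

section Aux

open Fin.NatCast

variable (K : Type*) [Field K] (n : ℕ)

lemma finRotate_eq_add_one [NeZero n] (i : Fin n) : finRotate n i = i + 1 := by
  cases n with
  | zero => exact absurd rfl (NeZero.ne 0)
  | succ m => exact finRotate_succ_apply i

lemma rot_ι (i : Fin n) : rotHom K n (FreeAlgebra.ι K i) = FreeAlgebra.ι K (finRotate n i) := by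
  simp [rotHom]

lemma word_nil : wordMonomial K n [] = 1 := rfl

lemma word_cons (a : Fin n) (l : List (Fin n)) :
    wordMonomial K n (a :: l) = FreeAlgebra.ι K a * wordMonomial K n l := by
  simp [wordMonomial]

lemma word_append (l₁ l₂ : List (Fin n)) :
    wordMonomial K n (l₁ ++ l₂) = wordMonomial K n l₁ * wordMonomial K n l₂ := by
  simp [wordMonomial]

lemma algHom_word (f : FreeAlgebra K (Fin n) →ₐ[K] FreeAlgebra K (Fin n))
    (g : Fin n → Fin n) (hfg : ∀ i, f (FreeAlgebra.ι K i) = FreeAlgebra.ι K (g i)) :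
    ∀ l : List (Fin n), f (wordMonomial K n l) = wordMonomial K n (l.map g)
  | [] => by simp [word_nil]
  | a :: l => by
      rw [word_cons, map_mul, hfg, algHom_word f g hfg l, List.map_cons, word_cons]

noncomputable def rotPow : ℕ → (FreeAlgebra K (Fin n) →ₐ[K] FreeAlgebra K (Fin n))
  | 0 => AlgHom.id K _
  | m + 1 => (rotHom K n).comp (rotPow m)

lemma rotPow_eq_iterate (m : ℕ) : ⇑(rotPow K n m) = (⇑(rotHom K n))^[m] := by
  induction m with
  | zero => rfl
  | succ m ih =>
      funext x
      rw [Function.iterate_succ_apply']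
      show rotHom K n (rotPow K n m x) = _
      rw [ih]

lemma rotPow_ι (m : ℕ) (i : Fin n) :
    rotPow K n m (FreeAlgebra.ι K i) = FreeAlgebra.ι K ((finRotate n)^[m] i) := by
  induction m with
  | zero => rfl
  | succ m ih =>
      show rotHom K n (rotPow K n m (FreeAlgebra.ι K i)) = _
      rw [ih, rot_ι, Function.iterate_succ_apply']

lemma finRotate_iterate [NeZero n] (m : ℕ) (i : Fin n) :
    (finRotate n)^[m] i = i + (m : Fin n) := by
  induction m with
  | zero => simp
  | succ m ih =>
      rw [Function.iterate_succ_apply', ih, finRotate_eq_add_one n]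
      push_cast
      rw [add_assoc]

lemma rotPow_n_apply (hn : 0 < n) (x : FreeAlgebra K (Fin n)) : rotPow K n n x = x := by
  haveI : NeZero n := ⟨hn.ne'⟩
  have : rotPow K n n = AlgHom.id K (FreeAlgebra K (Fin n)) := by
    apply FreeAlgebra.hom_ext
    funext i
    show rotPow K n n (FreeAlgebra.ι K i) = FreeAlgebra.ι K i
    rw [rotPow_ι, finRotate_iterate n]
    simp
  rw [this]; rfl

lemma orbit_rot (hn : 0 < n) (p : FreeAlgebra K (Fin n)) :
    ∑ m ∈ range n, (⇑(rotHom K n))^[m] (rotHom K n p) = ∑ m ∈ range n, (⇑(rotHom K n))^[m] p := by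
  have h1 : ∀ m, (⇑(rotHom K n))^[m] (rotHom K n p) = (⇑(rotHom K n))^[m + 1] p := fun m =>
    (Function.iterate_succ_apply _ _ _).symm
  simp only [h1]
  have h2 := Finset.sum_range_succ' (fun m => (⇑(rotHom K n))^[m] p) n
  have h3 := Finset.sum_range_succ (fun m => (⇑(rotHom K n))^[m] p) n
  have h4 : (⇑(rotHom K n))^[n] p = p := by
    rw [← rotPow_eq_iterate, rotPow_n_apply K n hn]
  have h5 : (⇑(rotHom K n))^[0] p = p := rfl
  rw [h3] at h2
  rw [h4, h5] at h2
  exact (add_right_cancel h2.symm)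

lemma orbit_rotPow (hn : 0 < n) (c : ℕ) (p : FreeAlgebra K (Fin n)) :
    ∑ m ∈ range n, (⇑(rotHom K n))^[m] (rotPow K n c p) = ∑ m ∈ range n, (⇑(rotHom K n))^[m] p := by
  induction c with
  | zero => rfl
  | succ c ih =>
      show ∑ m ∈ range n, (⇑(rotHom K n))^[m] (rotHom K n (rotPow K n c p)) = _
      rw [orbit_rot K n hn, ih]

end Aux

/-! ### Sorting helpers -/

section SortAux

variable {n : ℕ}

lemma sorted_lt_map {f : Fin n → Fin n} :
    ∀ {l : List (Fin n)}, l.Pairwise (· < ·) →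
      (∀ a ∈ l, ∀ b ∈ l, a < b → f a < f b) → (l.map f).Pairwise (· < ·)
  | [], _, _ => by simp
  | a :: l, h, hm => by
      rw [List.map_cons, List.pairwise_cons]
      rw [List.pairwise_cons] at h
      refine ⟨?_, sorted_lt_map h.2 fun x hx y hy hxy =>
        hm x (List.mem_cons_of_mem _ hx) y (List.mem_cons_of_mem _ hy) hxy⟩
      rintro b hb
      obtain ⟨x, hx, rfl⟩ := List.mem_map.mp hb
      exact hm a (List.mem_cons_self) x (List.mem_cons_of_mem _ hx) (h.1 x hx)

lemma sort_image {S : Finset (Fin n)} {f : Fin n → Fin n}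
    (hmono : ∀ a ∈ S, ∀ b ∈ S, a < b → f a < f b) :
    (S.image f).sort (· ≤ ·) = (S.sort (· ≤ ·)).map f := by
  have hinj : Set.InjOn f S := by
    intro a ha b hb hab
    by_contra hne
    rcases lt_or_gt_of_ne hne with h | h
    · exact absurd hab (hmono a ha b hb h).ne
    · exact absurd hab.symm (hmono b hb a ha h).ne
  apply (fun p s => List.Perm.eq_of_pairwise' (r := (· ≤ ·)) (Finset.pairwise_sort _ _) s p) ?_ ?_
  · rw [← Multiset.coe_eq_coe]
    rw [Finset.sort_eq]
    rw [Finset.image_val_of_injOn hinj]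
    rw [← Multiset.map_coe, Finset.sort_eq]
  · have hs : ((S.sort (· ≤ ·)).map f).Pairwise (· < ·) := by
      apply sorted_lt_map ((Finset.sortedLT_sort S).pairwise)
      intro a ha b hb hab
      exact hmono a (Finset.mem_sort _ |>.mp ha) b (Finset.mem_sort _ |>.mp hb) hab
    exact hs.imp (fun h => le_of_lt h)

lemma sort_insert_max {S : Finset (Fin n)} {a : Fin n}
    (h : ∀ b ∈ S, b < a) (ha : a ∉ S) :
    (insert a S).sort (· ≤ ·) = S.sort (· ≤ ·) ++ [a] := by
  apply (fun p s => List.Perm.eq_of_pairwise' (r := (· ≤ ·)) (Finset.pairwise_sort _ _) s p) ?_ ?_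
  · rw [← Multiset.coe_eq_coe, Finset.sort_eq, Finset.insert_val_of_notMem ha,
      ← Multiset.coe_add, Finset.sort_eq]
    rw [add_comm]
    rfl
  · rw [List.pairwise_append]
    refine ⟨Finset.pairwise_sort _ _, by simp, ?_⟩
    intro x hx y hy
    simp only [List.mem_singleton] at hy
    subst hy
    exact (h x ((Finset.mem_sort _).mp hx)).le

end SortAux

/-! ### The polynomials `e A k` -/

section EP

variable (K : Type*) [Field K] (n : ℕ)

noncomputable def eP (A : Finset (Fin n)) (k : ℕ) : FreeAlgebra K (Fin n) :=
  ∑ s ∈ A.powersetCard k, wordMonomial K n (s.sort (· ≤ ·))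

lemma elemPoly_eq (k : ℕ) : elemPoly K n k = eP K n univ k := rfl

lemma eP_zero (A : Finset (Fin n)) : eP K n A 0 = 1 := by
  simp [eP, wordMonomial]

lemma eP_insert_min {A : Finset (Fin n)} {a : Fin n} (ha : a ∉ A)
    (hmin : ∀ b ∈ A, a < b) (k : ℕ) :
    eP K n (insert a A) (k + 1) = eP K n A (k + 1) + FreeAlgebra.ι K a * eP K n A k := by
  have hdis : Disjoint (A.powersetCard (k + 1)) ((A.powersetCard k).image (insert a)) := by
    rw [Finset.disjoint_left]
    intro s hs hs'
    obtain ⟨t, ht, rfl⟩ := Finset.mem_image.mp hs'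
    have : a ∈ A := (Finset.mem_powersetCard.mp hs).1 (Finset.mem_insert_self a t)
    exact ha this
  rw [eP, Finset.powersetCard_succ_insert ha, Finset.sum_union hdis]
  congr 1
  rw [Finset.sum_image ?hinj]
  case hinj =>
    intro x hx y hy hxy
    have hax : a ∉ x := fun h => ha ((Finset.mem_powersetCard.mp hx).1 h)
    have hay : a ∉ y := fun h => ha ((Finset.mem_powersetCard.mp hy).1 h)
    rw [← Finset.erase_insert hax, ← Finset.erase_insert hay, hxy]
  rw [eP, Finset.mul_sum]
  apply Finset.sum_congr rfl
  intro s hs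
  have hsA : s ⊆ A := (Finset.mem_powersetCard.mp hs).1
  have has : a ∉ s := fun h => ha (hsA h)
  rw [Finset.sort_insert _ (fun b hb => (hmin b (hsA hb)).le) has, word_cons]

lemma eP_insert_max {A : Finset (Fin n)} {a : Fin n} (ha : a ∉ A)
    (hmax : ∀ b ∈ A, b < a) (k : ℕ) :
    eP K n (insert a A) (k + 1) = eP K n A (k + 1) + eP K n A k * FreeAlgebra.ι K a := by
  have hdis : Disjoint (A.powersetCard (k + 1)) ((A.powersetCard k).image (insert a)) := by
    rw [Finset.disjoint_left]
    intro s hs hs'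
    obtain ⟨t, ht, rfl⟩ := Finset.mem_image.mp hs'
    have : a ∈ A := (Finset.mem_powersetCard.mp hs).1 (Finset.mem_insert_self a t)
    exact ha this
  rw [eP, Finset.powersetCard_succ_insert ha, Finset.sum_union hdis]
  congr 1
  rw [Finset.sum_image ?hinj]
  case hinj =>
    intro x hx y hy hxy
    have hax : a ∉ x := fun h => ha ((Finset.mem_powersetCard.mp hx).1 h)
    have hay : a ∉ y := fun h => ha ((Finset.mem_powersetCard.mp hy).1 h)
    rw [← Finset.erase_insert hax, ← Finset.erase_insert hay, hxy]
  rw [eP, Finset.sum_mul]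
  apply Finset.sum_congr rfl
  intro s hs
  have hsA : s ⊆ A := (Finset.mem_powersetCard.mp hs).1
  have has : a ∉ s := fun h => ha (hsA h)
  rw [sort_insert_max (fun b hb => hmax b (hsA hb)) has, word_append]
  simp [wordMonomial]

lemma eP_image (f : Equiv.Perm (Fin n)) {A : Finset (Fin n)}
    (hmono : ∀ a ∈ A, ∀ b ∈ A, a < b → f a < f b) (k : ℕ) :
    eP K n (A.image ⇑f) k = ∑ s ∈ A.powersetCard k, wordMonomial K n ((s.sort (· ≤ ·)).map ⇑f) := by
  rw [eP]
  refine (Finset.sum_nbij' (i := fun s => s.image ⇑f) (j := fun s => s.image ⇑f.symm)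
    ?_ ?_ ?_ ?_ ?_).symm
  · intro s hs
    rw [Finset.mem_powersetCard] at hs ⊢
    exact ⟨Finset.image_subset_image hs.1, by rw [Finset.card_image_of_injective _ f.injective, hs.2]⟩
  · intro s hs
    rw [Finset.mem_powersetCard] at hs ⊢
    constructor
    · intro x hx
      obtain ⟨y, hy, rfl⟩ := Finset.mem_image.mp hx
      have := hs.1 hy
      obtain ⟨z, hz, rfl⟩ := Finset.mem_image.mp this
      rw [Equiv.symm_apply_apply]
      exact hz
    · rw [Finset.card_image_of_injective _ f.symm.injective, hs.2]
  · intro s _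
    simp [Finset.image_image]
  · intro s _
    simp [Finset.image_image]
  · intro s hs
    have hsA : s ⊆ A := (Finset.mem_powersetCard.mp hs).1
    rw [sort_image fun a ha b hb hab => hmono a (hsA ha) b (hsA hb) hab]

end EP

/-! ### Rotation of the elementary polynomials -/

lemma pos_of_three_le_n {n : ℕ} (hn : 3 ≤ n) : 0 < n := by omega

section RotElem

variable (K : Type*) [Field K] (n : ℕ)

lemma frv1 (hn : 3 ≤ n) {x : Fin n} (hx : x.val + 1 < n) :
    ((finRotate n) x).val = x.val + 1 := by
  haveI : NeZero n := ⟨by omega⟩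
  rw [finRotate_eq_add_one, Fin.add_def, Fin.val_one' n,
    Nat.mod_eq_of_lt (show 1 < n by omega)]
  show (x.val + 1) % n = x.val + 1
  exact Nat.mod_eq_of_lt hx

lemma frlast (hn : 3 ≤ n) :
    (finRotate n) (⟨n - 1, by omega⟩ : Fin n) = (⟨0, pos_of_three_le_n hn⟩ : Fin n) := by
  haveI : NeZero n := ⟨by omega⟩
  rw [finRotate_eq_add_one]
  apply Fin.ext
  rw [Fin.add_def, Fin.val_one' n, Nat.mod_eq_of_lt (show 1 < n by omega)]
  show (n - 1 + 1) % n = 0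
  rw [Nat.sub_add_cancel (by omega), Nat.mod_self]

lemma image_erase_last (hn : 3 ≤ n) :
    (univ.erase (⟨n - 1, by omega⟩ : Fin n)).image ⇑(finRotate n) =
      univ.erase (⟨0, pos_of_three_le_n hn⟩ : Fin n) := by
  ext b
  simp only [Finset.mem_image, Finset.mem_erase, Finset.mem_univ, and_true]
  constructor
  · rintro ⟨a, hane, rfl⟩
    have hane' : a.val ≠ n - 1 := fun h => hane (Fin.ext h)
    have hav : a.val + 1 < n := by have := a.isLt; omega
    intro h0
    rw [Fin.ext_iff, frv1 n hn hav] at h0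
    simp at h0
  · intro hb
    have hb0 : b.val ≠ 0 := fun h => hb (Fin.ext h)
    have hbv := b.isLt
    refine ⟨⟨b.val - 1, by omega⟩, ?_, ?_⟩
    · intro h
      rw [Fin.ext_iff] at h
      simp only at h
      omega
    · apply Fin.ext
      rw [frv1 n hn (by simp; omega)]
      simp
      omega

lemma rot_eP_erase_last (hn : 3 ≤ n) (k : ℕ) :
    rotHom K n (eP K n (univ.erase (⟨n - 1, by omega⟩ : Fin n)) k) =
      eP K n (univ.erase (⟨0, pos_of_three_le_n hn⟩ : Fin n)) k := by
  have hmono : ∀ a ∈ univ.erase (⟨n - 1, by omega⟩ : Fin n),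
      ∀ b ∈ univ.erase (⟨n - 1, by omega⟩ : Fin n), a < b → finRotate n a < finRotate n b := by
    intro a ha b hb hab
    rw [Finset.mem_erase] at ha hb
    have ha' : a.val ≠ n - 1 := fun h => ha.1 (Fin.ext h)
    have hb'' : b.val ≠ n - 1 := fun h => hb.1 (Fin.ext h)
    have := a.isLt; have := b.isLt
    rw [Fin.lt_def] at hab ⊢
    rw [frv1 n hn (by omega), frv1 n hn (by omega)]
    omega
  rw [← image_erase_last n hn, eP_image K n (finRotate n) hmono k, eP, map_sum]
  apply Finset.sum_congr rfl
  intro s _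
  exact algHom_word K n (rotHom K n) ⇑(finRotate n) (rot_ι K n) _

lemma split_max (hn : 3 ≤ n) (j : ℕ) :
    elemPoly K n (j + 1) = eP K n (univ.erase (⟨n - 1, by omega⟩ : Fin n)) (j + 1) +
      eP K n (univ.erase (⟨n - 1, by omega⟩ : Fin n)) j *
        FreeAlgebra.ι K (⟨n - 1, by omega⟩ : Fin n) := by
  have hmax : ∀ b ∈ univ.erase (⟨n - 1, by omega⟩ : Fin n), b < (⟨n - 1, by omega⟩ : Fin n) := by
    intro b hb
    rw [Finset.mem_erase] at hb
    have hb' : b.val ≠ n - 1 := fun h => hb.1 (Fin.ext h)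
    have := b.isLt
    rw [Fin.lt_def]
    simp only
    omega
  have h := eP_insert_max K n (Finset.notMem_erase (⟨n - 1, by omega⟩ : Fin n) univ) hmax j
  rw [Finset.insert_erase (Finset.mem_univ _)] at h
  rw [elemPoly_eq]
  exact h

lemma split_min (hn : 3 ≤ n) (j : ℕ) :
    elemPoly K n (j + 1) = eP K n (univ.erase (⟨0, pos_of_three_le_n hn⟩ : Fin n)) (j + 1) +
      FreeAlgebra.ι K (⟨0, pos_of_three_le_n hn⟩ : Fin n) *
        eP K n (univ.erase (⟨0, pos_of_three_le_n hn⟩ : Fin n)) j := by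
  have hmin : ∀ b ∈ univ.erase (⟨0, pos_of_three_le_n hn⟩ : Fin n), (⟨0, pos_of_three_le_n hn⟩ : Fin n) < b := by
    intro b hb
    rw [Finset.mem_erase] at hb
    have hb' : b.val ≠ 0 := fun h => hb.1 (Fin.ext h)
    rw [Fin.lt_def]
    simp only
    omega
  have h := eP_insert_min K n (Finset.notMem_erase (⟨0, pos_of_three_le_n hn⟩ : Fin n) univ) hmin j
  rw [Finset.insert_erase (Finset.mem_univ _)] at h
  rw [elemPoly_eq]
  exact h

lemma rot_elemPoly (hn : 3 ≤ n) (j : ℕ) :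
    rotHom K n (elemPoly K n (j + 1)) =
      eP K n (univ.erase (⟨0, pos_of_three_le_n hn⟩ : Fin n)) (j + 1) +
        eP K n (univ.erase (⟨0, pos_of_three_le_n hn⟩ : Fin n)) j *
          FreeAlgebra.ι K (⟨0, pos_of_three_le_n hn⟩ : Fin n) := by
  rw [split_max K n hn j, map_add, map_mul, rot_eP_erase_last K n hn,
    rot_eP_erase_last K n hn, rot_ι, frlast n hn]

end RotElem

/-! ### Quotient lemmas -/

section Quot

variable (K : Type*) [Field K] (n : ℕ)

lemma mk_comm (i : Fin n) {j : ℕ} (h1 : 1 ≤ j) (h2 : j ≤ n) :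
    mkR K n (FreeAlgebra.ι K i) * mkR K n (elemPoly K n j) =
      mkR K n (elemPoly K n j) * mkR K n (FreeAlgebra.ι K i) := by
  have h := RingQuot.mkAlgHom_rel K
    (show commRel K n (FreeAlgebra.ι K i * elemPoly K n j) (elemPoly K n j * FreeAlgebra.ι K i)
      from ⟨i, j, h1, h2, rfl, rfl⟩)
  rw [map_mul, map_mul] at h
  exact h

lemma comm_eP (hn : 3 ≤ n) :
    ∀ j, j ≤ n - 1 →
      mkR K n (FreeAlgebra.ι K (⟨0, pos_of_three_le_n hn⟩ : Fin n)) *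
          mkR K n (eP K n (univ.erase (⟨0, pos_of_three_le_n hn⟩ : Fin n)) j) =
        mkR K n (eP K n (univ.erase (⟨0, pos_of_three_le_n hn⟩ : Fin n)) j) *
          mkR K n (FreeAlgebra.ι K (⟨0, pos_of_three_le_n hn⟩ : Fin n)) := by
  intro j
  induction j with
  | zero => intro _; rw [eP_zero, map_one, mul_one, one_mul]
  | succ j ih =>
      intro h
      have IH := ih (by omega)
      have hsplit := split_min K n hn j
      have hb' : mkR K n (eP K n (univ.erase (⟨0, pos_of_three_le_n hn⟩ : Fin n)) (j + 1)) =
          mkR K n (elemPoly K n (j + 1)) -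
            mkR K n (FreeAlgebra.ι K (⟨0, pos_of_three_le_n hn⟩ : Fin n)) *
              mkR K n (eP K n (univ.erase (⟨0, pos_of_three_le_n hn⟩ : Fin n)) j) := by
        rw [hsplit, map_add, map_mul]
        exact (add_sub_cancel_right _ _).symm
      set a := mkR K n (FreeAlgebra.ι K (⟨0, pos_of_three_le_n hn⟩ : Fin n)) with ha
      set b := mkR K n (eP K n (univ.erase (⟨0, pos_of_three_le_n hn⟩ : Fin n)) j) with hbdef
      set s := mkR K n (elemPoly K n (j + 1)) with hs
      have hcomm : a * s = s * a := mk_comm K n _ (by omega) (by omega)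
      have key : a * (a * b) = a * b * a := by
        conv_lhs => rw [IH]
        exact (mul_assoc a b a).symm
      rw [hb', mul_sub, sub_mul, hcomm, key]

lemma mk_rot_elem (hn : 3 ≤ n) {k : ℕ} (hk : 1 ≤ k) (hkn : k ≤ n) :
    mkR K n (rotHom K n (elemPoly K n k)) = mkR K n (elemPoly K n k) := by
  obtain ⟨j, rfl⟩ : ∃ j, k = j + 1 := ⟨k - 1, by omega⟩
  rw [rot_elemPoly K n hn j, split_min K n hn j, map_add, map_add, map_mul, map_mul,
    comm_eP K n hn j (by omega)]

noncomputable def rotR (hn : 3 ≤ n) : Rquot K n →ₐ[K] Rquot K n :=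
  RingQuot.liftAlgHom K ⟨(mkR K n).comp (rotHom K n), by
    rintro a b ⟨i, j, h1, h2, rfl, rfl⟩
    simp only [AlgHom.comp_apply, map_mul, rot_ι]
    rw [mk_rot_elem K n hn h1 h2, mk_comm K n _ h1 h2]⟩

lemma rotR_mk (hn : 3 ≤ n) (x : FreeAlgebra K (Fin n)) :
    rotR K n hn (mkR K n x) = mkR K n (rotHom K n x) :=
  RingQuot.liftAlgHom_mkAlgHom_apply _ _ _ _

lemma mk_iter_rot_elem (hn : 3 ≤ n) {k : ℕ} (hk : 1 ≤ k) (hkn : k ≤ n) (m : ℕ) :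
    mkR K n ((⇑(rotHom K n))^[m] (elemPoly K n k)) = mkR K n (elemPoly K n k) := by
  induction m with
  | zero => rfl
  | succ m ih =>
      rw [Function.iterate_succ_apply', ← rotR_mk K n hn, ih, rotR_mk K n hn,
        mk_rot_elem K n hn hk hkn]

end Quot

/-! ### The combinatorial reindexing -/

section PartA

open Fin.NatCast

variable (K : Type*) [Field K] (n : ℕ)

lemma word_shift [NeZero n] (c : ℕ) (l : List (Fin n)) :
    wordMonomial K n (l.map (fun s => s + (c : Fin n))) = rotPow K n c (wordMonomial K n l) := by
  refine (algHom_word K n (rotPow K n c) (fun s => s + (c : Fin n)) ?_ l).symm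
  intro i
  rw [rotPow_ι, finRotate_iterate n]

lemma orbit_shift [NeZero n] (hn : 3 ≤ n) {c : ℕ} (hc : c < n) {S : Finset (Fin n)}
    (hbound : ∀ s ∈ S, s.val + c < n) :
    orbitPoly K n ((S.image (fun s => s + (c : Fin n))).sort (· ≤ ·)) =
      orbitPoly K n (S.sort (· ≤ ·)) := by
  have hval : ∀ s ∈ S, ((s + (c : Fin n)).val = s.val + c) := by
    intro s hs
    show (s.val + ((c : Fin n)).val) % n = s.val + c
    rw [Fin.val_natCast, Nat.mod_eq_of_lt hc, Nat.mod_eq_of_lt (hbound s hs)]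
  have hmono : ∀ a ∈ S, ∀ b ∈ S, a < b →
      a + (c : Fin n) < b + (c : Fin n) := by
    intro a ha b hb hab
    rw [Fin.lt_def] at hab ⊢
    rw [hval a ha, hval b hb]
    omega
  rw [sort_image hmono]
  rw [orbitPoly, orbitPoly, word_shift K n c]
  exact orbit_rotPow K n (by omega) c _

/-- minimum value of a finset of `Fin n` (junk value `0` for `∅`). -/
noncomputable def mTf {n : ℕ} (T : Finset (Fin n)) : ℕ :=
  if h : T.Nonempty then (T.min' h).val else 0

def subF {n : ℕ} (m : ℕ) : Fin n → Fin n :=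
  fun t => ⟨t.val - m, lt_of_le_of_lt (Nat.sub_le _ _) t.isLt⟩

noncomputable def iF {n : ℕ} (T : Finset (Fin n)) : Σ _ : Finset (Fin n), ℕ :=
  ⟨T.image (subF (mTf T)), mTf T⟩

noncomputable def jF {n : ℕ} [NeZero n] (x : Σ _ : Finset (Fin n), ℕ) : Finset (Fin n) :=
  x.1.image (fun s => s + ((x.2 : ℕ) : Fin n))

lemma partA (hn : 3 ≤ n) (k : ℕ) (hk : 1 ≤ k) (hkn : k ≤ n) :
    ∑ m ∈ range n, (⇑(rotHom K n))^[m] (elemPoly K n k) =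
      ∑ S ∈ (Finset.univ.powersetCard k).filter (fun S => (⟨0, pos_of_three_le_n hn⟩ : Fin n) ∈ S),
        (((range n).filter (fun c => S.sup Fin.val + c < n)).card) •
          orbitPoly K n (S.sort (· ≤ ·)) := by
  haveI : NeZero n := ⟨by omega⟩
  -- LHS as a sum of orbit polynomials over all k-subsets
  have hL : ∑ m ∈ range n, (⇑(rotHom K n))^[m] (elemPoly K n k) =
      ∑ T ∈ Finset.univ.powersetCard k, orbitPoly K n (T.sort (· ≤ ·)) := by
    simp only [← rotPow_eq_iterate, elemPoly_eq, eP, map_sum, orbitPoly]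
    rw [Finset.sum_comm]
  rw [hL]
  -- RHS: turn the `•` into an inner sum, then into a sigma sum
  have hR : ∀ S : Finset (Fin n),
      (((range n).filter (fun c => S.sup Fin.val + c < n)).card) •
          orbitPoly K n (S.sort (· ≤ ·)) =
        ∑ c ∈ (range n).filter (fun c => S.sup Fin.val + c < n),
          orbitPoly K n (S.sort (· ≤ ·)) := fun S => (Finset.sum_const _).symm
  simp only [hR]
  rw [← Finset.sum_sigma ((Finset.univ.powersetCard k).filter
      (fun S => (⟨0, by omega⟩ : Fin n) ∈ S))
      (fun S => (range n).filter (fun c => S.sup Fin.val + c < n))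
      (fun x => orbitPoly K n (x.1.sort (· ≤ ·)))]
  -- now the bijection
  have hTfacts : ∀ T : Finset (Fin n), T ∈ Finset.univ.powersetCard k →
      T.Nonempty := by
    intro T hT
    rw [Finset.mem_powersetCard_univ] at hT
    rw [← Finset.card_pos, hT]
    omega
  have hmT : ∀ T : Finset (Fin n), ∀ h : T.Nonempty, mTf T = (T.min' h).val := by
    intro T h
    rw [mTf, dif_pos h]
  have hmTlt : ∀ T : Finset (Fin n), T ∈ Finset.univ.powersetCard k → mTf T < n := by
    intro T hT
    have hne := hTfacts T hT
    rw [hmT T hne]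
    exact (T.min' hne).isLt
  -- the composite `jF ∘ iF` is the identity
  have hji : ∀ T : Finset (Fin n), T ∈ Finset.univ.powersetCard k → jF (iF T) = T := by
    intro T hT
    have hne := hTfacts T hT
    have hm := hmT T hne
    have hmlt := hmTlt T hT
    show (T.image (subF (mTf T))).image (fun s => s + ((mTf T : ℕ) : Fin n)) = T
    rw [Finset.image_image]
    have heq : ∀ t ∈ T, ((fun s => s + ((mTf T : ℕ) : Fin n)) ∘ subF (mTf T)) t = t := by
      intro t ht
      have hle : mTf T ≤ t.val := by
        rw [hm]
        exact (Finset.min'_le T t ht)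
      apply Fin.ext
      show ((subF (mTf T) t).val + ((mTf T : ℕ) : Fin n).val) % n = t.val
      rw [Fin.val_natCast, Nat.mod_eq_of_lt hmlt]
      show (t.val - mTf T + mTf T) % n = t.val
      rw [Nat.sub_add_cancel hle, Nat.mod_eq_of_lt t.isLt]
    rw [Finset.image_congr heq, Finset.image_id']
  -- bounds for elements of the image set
  have hSbound : ∀ T : Finset (Fin n), ∀ s ∈ T.image (subF (mTf T)), s.val + mTf T < n := by
    intro T s hs
    obtain ⟨t, ht, rfl⟩ := Finset.mem_image.mp hs
    have h1 := t.isLt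
    have h2 : mTf T < n := by
      rcases Finset.eq_empty_or_nonempty T with h | h
      · rw [mTf, dif_neg (by simp [h])]; omega
      · rw [hmT T h]; exact (T.min' h).isLt
    show t.val - mTf T + mTf T < n
    omega
  apply Finset.sum_nbij' (i := iF) (j := jF)
  · -- hi : iF T ∈ sigma set
    intro T hT
    have hne := hTfacts T hT
    have hm := hmT T hne
    have hmlt := hmTlt T hT
    rw [Finset.mem_sigma]
    refine ⟨Finset.mem_filter.mpr ⟨Finset.mem_powersetCard_univ.mpr ?_, ?_⟩, ?_⟩
    · show (T.image (subF (mTf T))).card = k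
      rw [Finset.card_image_of_injOn, (Finset.mem_powersetCard_univ).mp hT]
      intro t1 h1 t2 h2 heq
      have hle1 : mTf T ≤ t1.val := by rw [hm]; exact Finset.min'_le T t1 h1
      have hle2 : mTf T ≤ t2.val := by rw [hm]; exact Finset.min'_le T t2 h2
      have hv := congrArg Fin.val heq
      simp only [subF] at hv
      apply Fin.ext
      omega
    · show (⟨0, by omega⟩ : Fin n) ∈ T.image (subF (mTf T))
      rw [Finset.mem_image]
      refine ⟨T.min' hne, T.min'_mem hne, ?_⟩
      apply Fin.ext
      show (T.min' hne).val - mTf T = 0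
      rw [hm]
      omega
    · show mTf T ∈ (range n).filter
        (fun c => (T.image (subF (mTf T))).sup Fin.val + c < n)
      rw [Finset.mem_filter, Finset.mem_range]
      refine ⟨hmlt, ?_⟩
      have hsup : (T.image (subF (mTf T))).sup Fin.val < n - mTf T := by
        rw [Finset.sup_image]
        rw [Finset.sup_lt_iff (show (⊥ : ℕ) < n - mTf T by
          simp only [bot_eq_zero]; omega)]
        intro t ht
        have := t.isLt
        show t.val - mTf T < n - mTf T
        omega
      omega
  · -- hj : jF x ∈ powersetCard
    intro x hx
    rw [Finset.mem_sigma] at hx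
    obtain ⟨hS, hc⟩ := hx
    rw [Finset.mem_filter, Finset.mem_range] at hc
    rw [Finset.mem_filter, Finset.mem_powersetCard_univ] at hS
    have hbound : ∀ s ∈ x.fst, s.val + x.snd < n := by
      intro s hs
      have := Finset.le_sup (f := Fin.val) hs
      omega
    have hval : ∀ s ∈ x.fst, ((s + ((x.snd : ℕ) : Fin n)).val = s.val + x.snd) := by
      intro s hs
      show (s.val + (((x.snd : ℕ) : Fin n)).val) % n = s.val + x.snd
      rw [Fin.val_natCast, Nat.mod_eq_of_lt hc.1, Nat.mod_eq_of_lt (hbound s hs)]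
    show x.fst.image (fun s => s + ((x.snd : ℕ) : Fin n)) ∈ _
    rw [Finset.mem_powersetCard_univ, Finset.card_image_of_injOn, hS.1]
    intro s1 h1 s2 h2 heq
    have hv := congrArg Fin.val heq
    rw [hval s1 h1, hval s2 h2] at hv
    apply Fin.ext
    omega
  · -- left_inv
    intro T hT
    exact hji T hT
  · -- right_inv
    intro x hx
    rw [Finset.mem_sigma] at hx
    obtain ⟨hS, hc⟩ := hx
    rw [Finset.mem_filter, Finset.mem_range] at hc
    rw [Finset.mem_filter, Finset.mem_powersetCard_univ] at hS
    have hbound : ∀ s ∈ x.fst, s.val + x.snd < n := by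
      intro s hs
      have := Finset.le_sup (f := Fin.val) hs
      omega
    have hval : ∀ s ∈ x.fst, ((s + ((x.snd : ℕ) : Fin n)).val = s.val + x.snd) := by
      intro s hs
      show (s.val + (((x.snd : ℕ) : Fin n)).val) % n = s.val + x.snd
      rw [Fin.val_natCast, Nat.mod_eq_of_lt hc.1, Nat.mod_eq_of_lt (hbound s hs)]
    have hz : (⟨0, by omega⟩ : Fin n) ∈ x.fst := hS.2
    have hne : (jF x).Nonempty := Finset.Nonempty.image ⟨_, hz⟩ _
    have hmval : mTf (jF x) = x.snd := by
      rw [hmT _ hne]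
      apply le_antisymm
      · have hmem : (⟨0, by omega⟩ : Fin n) + ((x.snd : ℕ) : Fin n) ∈ jF x :=
          Finset.mem_image_of_mem _ hz
        have hle := Finset.min'_le _ _ hmem
        rw [Fin.le_def] at hle
        rw [hval _ hz] at hle
        simpa using hle
      · have hmem := Finset.min'_mem (jF x) hne
        obtain ⟨s, hs, heq⟩ := Finset.mem_image.mp hmem
        rw [← heq, hval s hs]
        omega
    have hfst : (jF x).image (subF (mTf (jF x))) = x.fst := by
      rw [hmval]
      show (x.fst.image (fun s => s + ((x.snd : ℕ) : Fin n))).image (subF x.snd) = x.fst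
      rw [Finset.image_image]
      have heq : ∀ s ∈ x.fst, (subF x.snd ∘ (fun s => s + ((x.snd : ℕ) : Fin n))) s = s := by
        intro s hs
        apply Fin.ext
        show (s + ((x.snd : ℕ) : Fin n)).val - x.snd = s.val
        rw [hval s hs]
        omega
      rw [Finset.image_congr heq, Finset.image_id']
    refine Sigma.ext hfst (heq_of_eq hmval)
  · -- summand equality
    intro T hT
    have hmlt := hmTlt T hT
    show orbitPoly K n (T.sort (· ≤ ·)) = orbitPoly K n ((iF T).1.sort (· ≤ ·))
    conv_lhs => rw [← hji T hT]
    show orbitPoly K n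
        (((T.image (subF (mTf T))).image (fun s => s + ((mTf T : ℕ) : Fin n))).sort (· ≤ ·)) =
      orbitPoly K n ((T.image (subF (mTf T))).sort (· ≤ ·))
    exact orbit_shift K n hn hmlt (hSbound T)

end PartA

/-- For each `1 ≤ k ≤ n` there are positive integers `α_S`, indexed by the
`k`-element subsets `S` of the index set containing the first index, such that
in `R′` one has `n·σ_k = ∑_S α_S · \overline{x_{w(S)}}`, where `w(S)` lists the
elements of `S` in increasing order. -/
theorem n_smul_elemPoly_eq_sum_orbitPolys
    (K : Type*) [Field K] [CharZero K] (n : ℕ) (hn : 3 ≤ n)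
    (k : ℕ) (hk : 1 ≤ k) (hkn : k ≤ n) :
    ∃ α : Finset (Fin n) → ℕ,
      (∀ S : Finset (Fin n), S.card = k → (⟨0, by omega⟩ : Fin n) ∈ S → 0 < α S) ∧
      (n : Rquot K n) * mkR K n (elemPoly K n k) =
        ∑ S ∈ (Finset.univ.powersetCard k).filter (fun S => (⟨0, by omega⟩ : Fin n) ∈ S),
          (α S : Rquot K n) * mkR K n (orbitPoly K n (S.sort (· ≤ ·))) := by
  haveI : NeZero n := ⟨by omega⟩
  refine ⟨fun S => ((range n).filter (fun c => S.sup Fin.val + c < n)).card, ?_, ?_⟩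
  · intro S _ _
    apply Finset.card_pos.mpr
    refine ⟨0, ?_⟩
    rw [Finset.mem_filter, Finset.mem_range]
    refine ⟨by omega, ?_⟩
    rw [add_zero]
    rw [Finset.sup_lt_iff (show (⊥ : ℕ) < n by simp only [bot_eq_zero]; omega)]
    intro b _
    exact b.isLt
  · have hA := partA K n hn k hk hkn
    have hL : mkR K n (∑ m ∈ range n, (⇑(rotHom K n))^[m] (elemPoly K n k)) =
        (n : Rquot K n) * mkR K n (elemPoly K n k) := by
      rw [map_sum]
      rw [Finset.sum_congr rfl (fun m _ => mk_iter_rot_elem K n hn hk hkn m)]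
      rw [Finset.sum_const, Finset.card_range, nsmul_eq_mul]
    rw [← hL, hA, map_sum]
    apply Finset.sum_congr rfl
    intro S _
    rw [map_nsmul, nsmul_eq_mul]
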